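/- Let H be the simple graph with vertex set {a_i : i ∈ ZMod 6} ∪ {b_j : j ∈ ZMod 18}, whose edges are a_i–a_{i+1} for all i ∈ ZMod 6, b_j–b_{j+1} for all j ∈ ZMod 18, and the six radial edges a_i–b_{3i} for i ∈ ZMod 6. Then there is no proper total coloring of H with a set of 4 colors in which some single color t is assigned to all six radial edges while no vertex b_j and no edge b_j–b_{j+1} of the 18-cycle receives the color t. -/
import Mathlib


/-- A proper total coloring of `G`: `cv` colors the vertices, `ce` colors the edges
(as unordered pairs); adjacent vertices get different colors, an edge gets a color
different from both of its endpoints, and edges sharing an endpoint get different colors. -/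
def IsTotalColoring {V C : Type*} (G : SimpleGraph V) (cv : V → C) (ce : Sym2 V → C) : Prop :=
  (∀ ⦃u v : V⦄, G.Adj u v → cv u ≠ cv v) ∧
  (∀ ⦃u v : V⦄, G.Adj u v → ce s(u, v) ≠ cv u) ∧
  (∀ ⦃u v w : V⦄, G.Adj u v → G.Adj u w → v ≠ w → ce s(u, v) ≠ ce s(u, w))

/-- The inner (outer) layer of a fullerene nanodisc: a 6-cycle on the `Sum.inl`
copy of `ZMod 6` (vertices `a_i`), an 18-cycle on the `Sum.inr` copy of
`ZMod 18` (vertices `b_j`), and six radial edges `a_i — b_{3i}`. -/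
def innerLayerGraph : SimpleGraph (ZMod 6 ⊕ ZMod 18) :=
  SimpleGraph.fromRel (fun a b =>
    match a, b with
    | Sum.inl i, Sum.inl j => j = i + 1
    | Sum.inr i, Sum.inr j => j = i + 1
    | Sum.inl i, Sum.inr j => j = (3 * i.val : ZMod 18)
    | Sum.inr _, Sum.inl _ => False)

open Sum

private lemma period3 (t v0 v1 v2 v3 e0 e1 e2 : Fin 4)
    (h1 : v0 ≠ t) (h2 : v1 ≠ t) (h3 : v2 ≠ t) (h4 : v3 ≠ t)
    (h5 : e0 ≠ t) (h6 : e1 ≠ t) (h7 : e2 ≠ t)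
    (h8 : v0 ≠ v1) (h9 : v1 ≠ v2) (h10 : v2 ≠ v3)
    (h11 : e0 ≠ v0) (h12 : e0 ≠ v1) (h13 : e1 ≠ v1) (h14 : e1 ≠ v2)
    (h15 : e2 ≠ v2) (h16 : e2 ≠ v3)
    (h17 : e0 ≠ e1) (h18 : e1 ≠ e2) : v3 = v0 := by
  have b1 := t.isLt; have b2 := v0.isLt; have b3 := v1.isLt; have b4 := v2.isLt
  have b5 := v3.isLt; have b6 := e0.isLt; have b7 := e1.isLt; have b8 := e2.isLt
  simp only [Ne, Fin.ext_iff] at *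
  omega

private lemma skip2 (t v0 v1 v2 e0 e1 : Fin 4)
    (h1 : v0 ≠ t) (h2 : v1 ≠ t) (h3 : v2 ≠ t)
    (h4 : e0 ≠ t) (h5 : e1 ≠ t)
    (h6 : v0 ≠ v1) (h7 : v1 ≠ v2)
    (h8 : e0 ≠ v0) (h9 : e0 ≠ v1) (h10 : e1 ≠ v1) (h11 : e1 ≠ v2)
    (h12 : e0 ≠ e1) : v0 ≠ v2 := by
  have b1 := t.isLt; have b2 := v0.isLt; have b3 := v1.isLt; have b4 := v2.isLt
  have b5 := e0.isLt; have b6 := e1.isLt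
  simp only [Ne, Fin.ext_iff] at *
  omega

private lemma final4 (t a0 a1 a2 b : Fin 4)
    (h1 : a0 ≠ t) (h2 : a1 ≠ t) (h3 : a2 ≠ t)
    (h4 : a0 ≠ a1) (h5 : a1 ≠ a2) (h6 : a0 ≠ a2)
    (h7 : b ≠ t) (h8 : b ≠ a0) (h9 : b ≠ a1) (h10 : b ≠ a2) : False := by
  have b1 := t.isLt; have b2 := a0.isLt; have b3 := a1.isLt; have b4 := a2.isLt
  have b5 := b.isLt
  simp only [Ne, Fin.ext_iff] at *
  omega

private lemma adjA (i : ZMod 6) : innerLayerGraph.Adj (inl i) (inl (i + 1)) := by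
  simp only [innerLayerGraph, SimpleGraph.fromRel_adj]
  refine ⟨fun h => ?_, Or.inl trivial⟩
  exact (by decide : (1 : ZMod 6) ≠ 0) (left_eq_add.mp (inl.inj h))

private lemma adjB (j : ZMod 18) : innerLayerGraph.Adj (inr j) (inr (j + 1)) := by
  simp only [innerLayerGraph, SimpleGraph.fromRel_adj]
  refine ⟨fun h => ?_, Or.inl trivial⟩
  exact (by decide : (1 : ZMod 18) ≠ 0) (left_eq_add.mp (inr.inj h))

private lemma adjR (i : ZMod 6) :
    innerLayerGraph.Adj (inl i) (inr ((3 * i.val : ZMod 18))) := by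
  simp only [innerLayerGraph, SimpleGraph.fromRel_adj]
  exact ⟨by simp, Or.inl trivial⟩

theorem innerLayer_no_four_total_coloring_radial_monochromatic :
    ¬ ∃ (cv : ZMod 6 ⊕ ZMod 18 → Fin 4) (ce : Sym2 (ZMod 6 ⊕ ZMod 18) → Fin 4) (t : Fin 4),
      IsTotalColoring innerLayerGraph cv ce ∧
      (∀ i : ZMod 6, ce s(Sum.inl i, Sum.inr ((3 * i.val : ZMod 18))) = t) ∧
      (∀ j : ZMod 18, cv (Sum.inr j) ≠ t ∧ ce s(Sum.inr j, Sum.inr (j + 1)) ≠ t) := by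
  rintro ⟨cv, ce, t, ⟨hcv, hce, hee⟩, hrad, hB⟩
  -- numeral normalizations
  have z1 : (0 : ZMod 18) + 1 = 1 := by decide
  have z2 : (1 : ZMod 18) + 1 = 2 := by decide
  have z3 : (2 : ZMod 18) + 1 = 3 := by decide
  have z4 : (3 : ZMod 18) + 1 = 4 := by decide
  have z5 : (4 : ZMod 18) + 1 = 5 := by decide
  have z6 : (5 : ZMod 18) + 1 = 6 := by decide
  have w1 : (0 : ZMod 6) + 1 = 1 := by decide
  have w2 : (1 : ZMod 6) + 1 = 2 := by decide
  have r0 : ((3 * (0 : ZMod 6).val : ZMod 18)) = 0 := by decide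
  have r1 : ((3 * (1 : ZMod 6).val : ZMod 18)) = 3 := by decide
  have r2 : ((3 * (2 : ZMod 6).val : ZMod 18)) = 6 := by decide
  -- generic facts on the 18-cycle
  have vBt : ∀ j : ZMod 18, cv (inr j) ≠ t := fun j => (hB j).1
  have eBt : ∀ j : ZMod 18, ce s(inr j, inr (j + 1)) ≠ t := fun j => (hB j).2
  have vBadj : ∀ j : ZMod 18, cv (inr j) ≠ cv (inr (j + 1)) := fun j => hcv (adjB j)
  have eBv1 : ∀ j : ZMod 18, ce s(inr j, inr (j + 1)) ≠ cv (inr j) := fun j => hce (adjB j)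
  have eBv2 : ∀ j : ZMod 18, ce s(inr j, inr (j + 1)) ≠ cv (inr (j + 1)) := by
    intro j
    rw [Sym2.eq_swap]
    exact hce (adjB j).symm
  have eBe : ∀ j : ZMod 18,
      ce s(inr j, inr (j + 1)) ≠ ce s(inr (j + 1), inr (j + 1 + 1)) := by
    intro j
    have hne : (inr j : ZMod 6 ⊕ ZMod 18) ≠ inr (j + 1 + 1) := by
      intro h
      have h' := inr.inj h
      rw [add_assoc] at h'
      exact (by decide : (1 + 1 : ZMod 18) ≠ 0) (left_eq_add.mp h')
    have h := hee (adjB j).symm (adjB (j + 1)) hne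
    rwa [Sym2.eq_swap] at h
  -- generic facts on the 6-cycle
  have vAadj : ∀ i : ZMod 6, cv (inl i) ≠ cv (inl (i + 1)) := fun i => hcv (adjA i)
  have vAt : ∀ i : ZMod 6, cv (inl i) ≠ t := by
    intro i
    have h := hce (adjR i)
    rw [hrad i] at h
    exact h.symm
  have vArad : ∀ i : ZMod 6, cv (inl i) ≠ cv (inr ((3 * i.val : ZMod 18))) :=
    fun i => hcv (adjR i)
  have eAv1 : ∀ i : ZMod 6, ce s(inl i, inl (i + 1)) ≠ cv (inl i) := fun i => hce (adjA i)
  have eAv2 : ∀ i : ZMod 6, ce s(inl i, inl (i + 1)) ≠ cv (inl (i + 1)) := by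
    intro i
    rw [Sym2.eq_swap]
    exact hce (adjA i).symm
  have eAt : ∀ i : ZMod 6, ce s(inl i, inl (i + 1)) ≠ t := by
    intro i
    have hne : (inl (i + 1) : ZMod 6 ⊕ ZMod 18) ≠ inr ((3 * i.val : ZMod 18)) := by simp
    have h := hee (adjA i) (adjR i) hne
    rwa [hrad i] at h
  have eAe : ∀ i : ZMod 6,
      ce s(inl i, inl (i + 1)) ≠ ce s(inl (i + 1), inl (i + 1 + 1)) := by
    intro i
    have hne : (inl i : ZMod 6 ⊕ ZMod 18) ≠ inl (i + 1 + 1) := by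
      intro h
      have h' := inl.inj h
      rw [add_assoc] at h'
      exact (by decide : (1 + 1 : ZMod 6) ≠ 0) (left_eq_add.mp h')
    have h := hee (adjA i).symm (adjA (i + 1)) hne
    rwa [Sym2.eq_swap] at h
  -- period 3 on the 18-cycle
  have per : ∀ j : ZMod 18, cv (inr (j + 1 + 1 + 1)) = cv (inr j) := by
    intro j
    exact period3 t (cv (inr j)) (cv (inr (j + 1))) (cv (inr (j + 1 + 1)))
      (cv (inr (j + 1 + 1 + 1)))
      (ce s(inr j, inr (j + 1))) (ce s(inr (j + 1), inr (j + 1 + 1)))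
      (ce s(inr (j + 1 + 1), inr (j + 1 + 1 + 1)))
      (vBt j) (vBt _) (vBt _) (vBt _) (eBt j) (eBt _) (eBt _)
      (vBadj j) (vBadj _) (vBadj _)
      (eBv1 j) (eBv2 j) (eBv1 _) (eBv2 _) (eBv1 _) (eBv2 _)
      (eBe j) (eBe _)
  have pB3 : cv (inr 3) = cv (inr 0) := by
    have h := per 0
    simp only [z1, z2, z3] at h
    exact h
  have pB6 : cv (inr 6) = cv (inr 3) := by
    have h := per 3
    simp only [z4, z5, z6] at h
    exact h
  -- distance-2 distinctness on the 6-cycle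
  have aper : ∀ i : ZMod 6, cv (inl i) ≠ cv (inl (i + 1 + 1)) := by
    intro i
    exact skip2 t (cv (inl i)) (cv (inl (i + 1))) (cv (inl (i + 1 + 1)))
      (ce s(inl i, inl (i + 1))) (ce s(inl (i + 1), inl (i + 1 + 1)))
      (vAt i) (vAt _) (vAt _) (eAt i) (eAt _)
      (vAadj i) (vAadj _)
      (eAv1 i) (eAv2 i) (eAv1 _) (eAv2 _)
      (eAe i)
  have hA02 : cv (inl 0) ≠ cv (inl 2) := by
    have h := aper 0
    simp only [w1, w2] at h
    exact h
  have hA01 : cv (inl 0) ≠ cv (inl 1) := by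
    have h := vAadj 0
    simp only [w1] at h
    exact h
  have hA12 : cv (inl 1) ≠ cv (inl 2) := by
    have h := vAadj 1
    simp only [w2] at h
    exact h
  -- radial disequalities
  have hr0 : cv (inl 0) ≠ cv (inr 0) := by
    have h := vArad 0
    rw [r0] at h
    exact h
  have hr1 : cv (inl 1) ≠ cv (inr 0) := by
    have h := vArad 1
    rw [r1, pB3] at h
    exact h
  have hr2 : cv (inl 2) ≠ cv (inr 0) := by
    have h := vArad 2
    rw [r2, pB6, pB3] at h
    exact h
  exact final4 t (cv (inl 0)) (cv (inl 1)) (cv (inl 2)) (cv (inr 0))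
    (vAt 0) (vAt 1) (vAt 2) hA01 hA12 hA02 (vBt 0)
    hr0.symm hr1.symm hr2.symm
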